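/- Let g be a Lie algebra over a field k and r = Σ_q s_q ⊗ t_q ∈ g ⊗ g a g-invariant tensor, meaning Σ_q ([X, s_q] ⊗ t_q + s_q ⊗ [X, t_q]) = 0 for all X ∈ g. Then in the universal enveloping algebra U(g)^{⊗3}, the 4-term relation [r^{12} + r^{13}, r^{23}] = 0 holds, where r^{12} = Σ s_q ⊗ t_q ⊗ 1, r^{13} = Σ s_q ⊗ 1 ⊗ t_q, r^{23} = Σ 1 ⊗ s_q ⊗ t_q. -/

import Mathlib

open scoped TensorProduct
open UniversalEnvelopingAlgebra

namespace Stmt1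

/-- For a `g`-invariant tensor `r = Σ_q s_q ⊗ t_q ∈ g ⊗ g`, the 4-term
relation `[r¹² + r¹³, r²³] = 0` holds in `U(g)^{⊗3}`, where
`r¹² = Σ s_q ⊗ t_q ⊗ 1`, `r¹³ = Σ s_q ⊗ 1 ⊗ t_q`, `r²³ = Σ 1 ⊗ s_q ⊗ t_q`. -/
theorem four_term_of_invariant {k : Type*} [Field k] {g : Type*} [LieRing g]
    [LieAlgebra k g] {q : Type*} [Fintype q] (s t : q → g)
    (hinv : ∀ X : g,
      (∑ i : q, (⁅X, s i⁆ ⊗ₜ[k] t i + s i ⊗ₜ[k] ⁅X, t i⁆)) = (0 : g ⊗[k] g)) :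
    letI U := UniversalEnvelopingAlgebra k g
    letI r12 : U ⊗[k] (U ⊗[k] U) :=
      ∑ i : q, (ι k (s i)) ⊗ₜ[k] ((ι k (t i)) ⊗ₜ[k] (1 : U))
    letI r13 : U ⊗[k] (U ⊗[k] U) :=
      ∑ i : q, (ι k (s i)) ⊗ₜ[k] ((1 : U) ⊗ₜ[k] (ι k (t i)))
    letI r23 : U ⊗[k] (U ⊗[k] U) :=
      ∑ i : q, (1 : U) ⊗ₜ[k] ((ι k (s i)) ⊗ₜ[k] (ι k (t i)))
    (r12 + r13) * r23 - r23 * (r12 + r13) = 0 := by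
  set U := UniversalEnvelopingAlgebra k g with hU
  letI : LieRing U := LieRing.ofAssociativeRing
  have hbr : ∀ a b : g, ((ι k ⁅a, b⁆ : U))
      = ι k a * ι k b - ι k b * ι k a := by
    intro a b
    rw [LieHom.map_lie, Ring.lie_def]
  have key : ∀ i : q, (∑ j : q,
      ((ι k (s i) : U) ⊗ₜ[k] ((ι k ⁅t i, s j⁆ : U) ⊗ₜ[k] (ι k (t j) : U))
        + (ι k (s i) : U) ⊗ₜ[k] ((ι k (s j) : U) ⊗ₜ[k] (ι k ⁅t i, t j⁆ : U)))) = 0 := by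
    intro i
    have h := congrArg (fun x => (TensorProduct.mk k U (U ⊗[k] U) (ι k (s i)))
        ((TensorProduct.map (ι k : g →ₗ⁅k⁆ U).toLinearMap (ι k : g →ₗ⁅k⁆ U).toLinearMap) x))
        (hinv (t i))
    simpa [map_sum, TensorProduct.tmul_add] using h
  have expand : ((∑ i : q, (ι k (s i) : U) ⊗ₜ[k] ((ι k (t i)) ⊗ₜ[k] (1 : U)))
        + ∑ i : q, (ι k (s i) : U) ⊗ₜ[k] ((1 : U) ⊗ₜ[k] (ι k (t i))))
        * (∑ i : q, (1 : U) ⊗ₜ[k] ((ι k (s i)) ⊗ₜ[k] (ι k (t i))))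
      - (∑ i : q, (1 : U) ⊗ₜ[k] ((ι k (s i)) ⊗ₜ[k] (ι k (t i))))
        * ((∑ i : q, (ι k (s i) : U) ⊗ₜ[k] ((ι k (t i)) ⊗ₜ[k] (1 : U)))
        + ∑ i : q, (ι k (s i) : U) ⊗ₜ[k] ((1 : U) ⊗ₜ[k] (ι k (t i))))
      = ∑ i : q, ∑ j : q,
        ((ι k (s i) : U) ⊗ₜ[k] ((ι k ⁅t i, s j⁆ : U) ⊗ₜ[k] (ι k (t j) : U))
        + (ι k (s i) : U) ⊗ₜ[k] ((ι k (s j) : U) ⊗ₜ[k] (ι k ⁅t i, t j⁆ : U))) := by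
    simp only [add_mul, mul_add, Finset.sum_mul, Finset.mul_sum,
      Algebra.TensorProduct.tmul_mul_tmul, one_mul, mul_one, hbr,
      TensorProduct.sub_tmul, TensorProduct.tmul_sub, TensorProduct.tmul_add]
    rw [Finset.sum_add_distrib,
      Finset.sum_comm (f := fun (x i : q) =>
        (ι k (s i) : U) ⊗ₜ[k] ((ι k (t i) * ι k (s x)) ⊗ₜ[k] (ι k (t x)))),
      Finset.sum_comm (f := fun (x i : q) =>
        (ι k (s i) : U) ⊗ₜ[k] ((ι k (s x) : U) ⊗ₜ[k] (ι k (t i) * ι k (t x))))]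
    simp only [← Finset.sum_add_distrib, ← Finset.sum_sub_distrib]
    refine Finset.sum_congr rfl fun i _ => Finset.sum_congr rfl fun j _ => ?_
    abel
  exact expand.trans (Finset.sum_eq_zero fun i _ => key i)

end Stmt1
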